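/- Let S be a pre-Hilbert space, L a pre-Hilbert space logic on S, and 𝒳 ⊆ L. Then 𝒳 has an infimum in the poset (L, ⊆) if and only if the set-theoretic intersection ⋂𝒳 belongs to L, and in that case the infimum equals ⋂𝒳. -/
import Mathlib


variable {𝕜 S : Type*} [RCLike 𝕜] [NormedAddCommGroup S] [InnerProductSpace 𝕜 S]

/-- A pre-Hilbert space logic on a pre-Hilbert space `S`: a family of orthogonally closed
linear subspaces containing `{0}`, closed under orthocomplementation and under the
addition of one-dimensional subspaces. -/
def IsPreHilbertLogic (L : Set (Submodule 𝕜 S)) : Prop :=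
  (∀ M ∈ L, Mᗮᗮ = M) ∧ (⊥ : Submodule 𝕜 S) ∈ L ∧ (∀ M ∈ L, Mᗮ ∈ L) ∧
    ∀ M ∈ L, ∀ u : S, M ⊔ (𝕜 ∙ u) ∈ L

/-- In a pre-Hilbert space logic `L` (ordered by inclusion), a subset `𝒳 ⊆ L` has an
infimum in `L` if and only if the set-theoretic intersection `⋂𝒳` (`sInf 𝒳` as a
submodule) belongs to `L`, and in that case the infimum equals `⋂𝒳`. -/
theorem logic_inf_iff (L : Set (Submodule 𝕜 S)) (hL : IsPreHilbertLogic L)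
    (X : Set (Submodule 𝕜 S)) (hX : X ⊆ L) :
    ((∃ m : L, IsGLB {A : L | (A : Submodule 𝕜 S) ∈ X} m) ↔ sInf X ∈ L) ∧
      ∀ m : L, IsGLB {A : L | (A : Submodule 𝕜 S) ∈ X} m → (m : Submodule 𝕜 S) = sInf X := by
  have key : ∀ m : L, IsGLB {A : L | (A : Submodule 𝕜 S) ∈ X} m →
      (m : Submodule 𝕜 S) = sInf X := by
    rintro ⟨m, hm⟩ ⟨hlb, hglb⟩
    refine le_antisymm (le_sInf fun A hA => ?_) ?_
    · exact hlb (a := ⟨A, hX hA⟩) hA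
    · intro u hu
      have hN : m ⊔ (𝕜 ∙ u) ∈ L := hL.2.2.2 m hm u
      have hlow : (⟨m ⊔ (𝕜 ∙ u), hN⟩ : L) ∈ lowerBounds {A : L | (A : Submodule 𝕜 S) ∈ X} := by
        rintro ⟨A, hAL⟩ hA
        have h1 : m ≤ A := hlb (a := ⟨A, hAL⟩) hA
        have h2 : (𝕜 ∙ u) ≤ A :=
          (Submodule.span_singleton_le_iff_mem u A).mpr (Submodule.mem_sInf.mp hu A hA)
        exact sup_le h1 h2
      have : m ⊔ (𝕜 ∙ u) ≤ m := hglb hlow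
      exact this (le_sup_right (a := m) (Submodule.mem_span_singleton_self u))
  refine ⟨⟨fun ⟨m, hm⟩ => key m hm ▸ m.2, fun h => ?_⟩, key⟩
  refine ⟨⟨sInf X, h⟩, fun A hA => ?_, fun b hb => ?_⟩
  · show sInf X ≤ (A : Submodule 𝕜 S)
    exact sInf_le hA
  · show (b : Submodule 𝕜 S) ≤ sInf X
    exact le_sInf fun A hA => hb (a := ⟨A, hX hA⟩) hA
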